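/- Let A ∈ Sⁿ and let C(A) = conv{Π A Πᵀ : Π ∈ Sym(n)} be the convex hull of the orbit of A under permutation conjugation. Then C(A) = ⋂_{P ∈ Sⁿ} {B ∈ Sⁿ : Θ_P(B) ≤ Θ_P(A)}. -/

import Mathlib

open Matrix

noncomputable def permConj {n : ℕ} (σ : Equiv.Perm (Fin n))
    (A : Matrix (Fin n) (Fin n) ℝ) : Matrix (Fin n) (Fin n) ℝ :=
  (σ.permMatrix ℝ) * A * (σ.permMatrix ℝ)ᵀ

/-- The elementary convex graph invariant `Θ_P(A) = max_Π tr(P Π A Πᵀ)`. -/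
noncomputable def theta {n : ℕ} (P A : Matrix (Fin n) (Fin n) ℝ) : ℝ :=
  (Finset.univ : Finset (Equiv.Perm (Fin n))).sup' Finset.univ_nonempty
    (fun σ => (P * permConj σ A).trace)

lemma permConj_eq {n : ℕ} (σ : Equiv.Perm (Fin n)) (A : Matrix (Fin n) (Fin n) ℝ) :
    permConj σ A = A.submatrix σ σ := by
  unfold permConj Equiv.Perm.permMatrix
  rw [PEquiv.toMatrix_toPEquiv_mul, ← PEquiv.toMatrix_symm, ← Equiv.toPEquiv_symm,
    PEquiv.mul_toMatrix_toPEquiv, submatrix_submatrix]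
  simp [Function.comp_def]

lemma permConj_permConj {n : ℕ} (σ τ : Equiv.Perm (Fin n)) (A : Matrix (Fin n) (Fin n) ℝ) :
    permConj τ (permConj σ A) = permConj (σ * τ) A := by
  simp only [permConj_eq, submatrix_submatrix]
  rfl

lemma permConj_one {n : ℕ} (A : Matrix (Fin n) (Fin n) ℝ) : permConj 1 A = A := by
  simp [permConj_eq]

lemma permConj_isSymm {n : ℕ} (σ : Equiv.Perm (Fin n)) {A : Matrix (Fin n) (Fin n) ℝ}
    (hA : A.IsSymm) : (permConj σ A).IsSymm := by
  rw [permConj_eq, Matrix.IsSymm, transpose_submatrix, hA]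

lemma permConj_lin {n : ℕ} (σ : Equiv.Perm (Fin n)) (a b : ℝ)
    (x y : Matrix (Fin n) (Fin n) ℝ) :
    permConj σ (a • x + b • y) = a • permConj σ x + b • permConj σ y := by
  ext i j
  simp [permConj_eq]

lemma trace_le_theta {n : ℕ} (P B : Matrix (Fin n) (Fin n) ℝ) (σ : Equiv.Perm (Fin n)) :
    (P * permConj σ B).trace ≤ theta P B :=
  Finset.le_sup' (fun σ => (P * permConj σ B).trace) (Finset.mem_univ σ)

lemma theta_permConj {n : ℕ} (P A : Matrix (Fin n) (Fin n) ℝ) (σ : Equiv.Perm (Fin n)) :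
    theta P (permConj σ A) = theta P A := by
  unfold theta
  apply le_antisymm
  · apply Finset.sup'_le
    intro τ _
    rw [permConj_permConj]
    exact Finset.le_sup' (fun τ => (P * permConj τ A).trace) (Finset.mem_univ (σ * τ))
  · apply Finset.sup'_le
    intro τ _
    have h := Finset.le_sup' (fun τ => (P * permConj τ (permConj σ A)).trace)
      (Finset.mem_univ (σ⁻¹ * τ))
    rw [permConj_permConj, mul_inv_cancel_left] at h
    exact h

theorem stmt3 (n : ℕ) (A : Matrix (Fin n) (Fin n) ℝ) (hA : A.IsSymm) :
    convexHull ℝ {B : Matrix (Fin n) (Fin n) ℝ | ∃ σ : Equiv.Perm (Fin n), B = permConj σ A} =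
      ⋂ P ∈ {P : Matrix (Fin n) (Fin n) ℝ | P.IsSymm},
        {B : Matrix (Fin n) (Fin n) ℝ | B.IsSymm ∧ theta P B ≤ theta P A} := by
  set S := {B : Matrix (Fin n) (Fin n) ℝ | ∃ σ : Equiv.Perm (Fin n), B = permConj σ A} with hS
  apply subset_antisymm
  · -- forward inclusion
    apply Set.subset_iInter₂
    intro P _
    apply convexHull_min
    · rintro B ⟨σ, rfl⟩
      exact ⟨permConj_isSymm σ hA, (theta_permConj P A σ).le⟩
    · rintro x ⟨hxs, hx⟩ y ⟨hys, hy⟩ a b ha hb hab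
      constructor
      · rw [Matrix.IsSymm, transpose_add, transpose_smul, transpose_smul, hxs, hys]
      · apply Finset.sup'_le
        intro σ _
        rw [permConj_lin, mul_add, mul_smul_comm, mul_smul_comm, trace_add, trace_smul,
          trace_smul, smul_eq_mul, smul_eq_mul]
        have e1 : a * (P * permConj σ x).trace ≤ a * theta P A :=
          mul_le_mul_of_nonneg_left ((trace_le_theta P x σ).trans hx) ha
        have e2 : b * (P * permConj σ y).trace ≤ b * theta P A :=
          mul_le_mul_of_nonneg_left ((trace_le_theta P y σ).trans hy) hb
        have e3 : a * theta P A + b * theta P A = theta P A := by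
          rw [← add_mul, hab, one_mul]
        linarith
  · -- reverse inclusion
    intro B hB
    by_contra hBhull
    have hSr : S = Set.range (fun σ : Equiv.Perm (Fin n) => permConj σ A) := by
      ext x; simp [hS, eq_comm, Set.range]
    have hfin : S.Finite := hSr ▸ Set.finite_range _
    letI : NormedAddCommGroup (Matrix (Fin n) (Fin n) ℝ) := Matrix.normedAddCommGroup
    letI : NormedSpace ℝ (Matrix (Fin n) (Fin n) ℝ) := Matrix.normedSpace
    letI : LocallyConvexSpace ℝ (Matrix (Fin n) (Fin n) ℝ) := NormedSpace.toLocallyConvexSpace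
    obtain ⟨f, u, hfu, huB⟩ := geometric_hahn_banach_closed_point
      (convex_convexHull ℝ S) (hfin.isClosed_convexHull ℝ) hBhull
    set Q : Matrix (Fin n) (Fin n) ℝ :=
      Matrix.of (fun i j => f (Matrix.single j i (1:ℝ))) with hQdef
    have hQ : ∀ M : Matrix (Fin n) (Fin n) ℝ, (Q * M).trace = f M := by
      intro M
      have hE : ∀ i j, f (Matrix.single i j (M i j)) = M i j * Q j i := by
        intro i j
        have h1 : Matrix.single i j (M i j) = (M i j) • Matrix.single i j (1:ℝ) := by
          rw [smul_single, smul_eq_mul, mul_one]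
        rw [h1, _root_.map_smul, smul_eq_mul]
        rfl
      conv_rhs => rw [matrix_eq_sum_single M]
      rw [map_sum]
      simp_rw [map_sum, hE]
      have hL : (Q * M).trace = ∑ i, ∑ j, Q i j * M j i := by
        simp [Matrix.trace, Matrix.mul_apply, Matrix.diag]
      rw [hL, Finset.sum_comm]
      exact Finset.sum_congr rfl fun i _ => Finset.sum_congr rfl fun j _ => mul_comm _ _
    set P : Matrix (Fin n) (Fin n) ℝ := (2⁻¹ : ℝ) • (Q + Qᵀ) with hPdef
    have hPsymm : P.IsSymm := by
      rw [Matrix.IsSymm, hPdef, transpose_smul, transpose_add, transpose_transpose, add_comm]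
    have hPtr : ∀ M : Matrix (Fin n) (Fin n) ℝ, M.IsSymm → (P * M).trace = f M := by
      intro M hM
      have h2 : (Qᵀ * M).trace = (Q * M).trace := by
        calc (Qᵀ * M).trace = (Qᵀ * Mᵀ).trace := by rw [hM]
          _ = ((M * Q)ᵀ).trace := by rw [transpose_mul]
          _ = (M * Q).trace := trace_transpose _
          _ = (Q * M).trace := trace_mul_comm _ _
      rw [hPdef, Matrix.smul_mul, Matrix.add_mul, trace_smul, trace_add, h2, hQ, smul_eq_mul]
      ring
    obtain ⟨hBsymm, hθ⟩ : B.IsSymm ∧ theta P B ≤ theta P A := by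
      have := Set.mem_iInter₂.mp hB P hPsymm
      exact this
    have h1 : (P * B).trace ≤ theta P B := by
      have := trace_le_theta P B 1
      rwa [permConj_one] at this
    have h2 : theta P A < u := by
      rw [theta, Finset.sup'_lt_iff]
      intro σ _
      rw [hPtr _ (permConj_isSymm σ hA)]
      exact hfu _ (subset_convexHull ℝ S ⟨σ, rfl⟩)
    rw [hPtr B hBsymm] at h1
    linarith
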